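/- Let N ≥ 2 be an integer and let c, d ∈ ℤ. If (1/2)B₂(⟨c/N⟩) = (1/2)B₂(0) and (1/2)B₂(⟨d/N⟩) = (1/2)B₂(1/N), where B₂(X) = X² - X + 1/6 and ⟨x⟩ is the fractional part of x, then c ≡ 0 (mod N) and d ≡ ±1 (mod N). -/

import Mathlib

/-- The second Bernoulli polynomial. -/
noncomputable def B₂ (x : ℝ) : ℝ := x ^ 2 - x + 1 / 6

lemma fract_div_int (N : ℕ) (hN : 0 < N) (d : ℤ) :
    Int.fract ((d : ℝ) / N) = ((d % (N : ℤ) : ℤ) : ℝ) / N := by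
  have hNZ : (N : ℤ) ≠ 0 := by exact_mod_cast hN.ne'
  have hNR : (0 : ℝ) < N := by exact_mod_cast hN
  have hd : (d : ℝ) = (N : ℝ) * ((d / (N : ℤ) : ℤ) : ℝ) + ((d % (N : ℤ) : ℤ) : ℝ) := by
    exact_mod_cast (Int.mul_ediv_add_emod d N).symm
  have h1 : (d : ℝ) / N = ((d / (N : ℤ) : ℤ) : ℝ) + ((d % (N : ℤ) : ℤ) : ℝ) / N := by
    rw [hd]; field_simp
  rw [h1, Int.fract_intCast_add, Int.fract_eq_self.2]
  constructor
  · apply div_nonneg _ hNR.le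
    exact_mod_cast Int.emod_nonneg d hNZ
  · rw [div_lt_one hNR]
    exact_mod_cast Int.emod_lt_of_pos d (by exact_mod_cast hN)

theorem fract_bernoulli_eq (N : ℕ) (hN : 2 ≤ N) (c d : ℤ)
    (hc : (1 / 2 : ℝ) * B₂ (Int.fract ((c : ℝ) / N)) = (1 / 2) * B₂ 0)
    (hd : (1 / 2 : ℝ) * B₂ (Int.fract ((d : ℝ) / N)) = (1 / 2) * B₂ (1 / N)) :
    c ≡ 0 [ZMOD N] ∧ (d ≡ 1 [ZMOD N] ∨ d ≡ -1 [ZMOD N]) := by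
  have hN0 : 0 < N := by omega
  have hNR : (0 : ℝ) < N := by exact_mod_cast hN0
  have hNne : (N : ℝ) ≠ 0 := hNR.ne'
  rw [fract_div_int N hN0 c] at hc
  rw [fract_div_int N hN0 d] at hd
  set r := c % (N : ℤ) with hr
  set s := d % (N : ℤ) with hs
  have hr0 : 0 ≤ r := Int.emod_nonneg c (by exact_mod_cast hN0.ne')
  have hrN : r < N := Int.emod_lt_of_pos c (by exact_mod_cast hN0)
  have hs0 : 0 ≤ s := Int.emod_nonneg d (by exact_mod_cast hN0.ne')
  have hsN : s < N := Int.emod_lt_of_pos d (by exact_mod_cast hN0)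
  simp only [B₂] at hc hd
  -- from hc : r * (r - N) = 0 essentially; r = 0 since 0 ≤ r < N
  have hcR : ((r : ℝ)) * ((r : ℝ) - N) = 0 := by
    field_simp at hc
    nlinarith [hc]
  have hrR : (r : ℝ) < N := by exact_mod_cast hrN
  have hc0 : r = 0 := by
    rcases mul_eq_zero.1 hcR with h | h
    · exact_mod_cast h
    · exfalso; linarith
  have hdR : ((s : ℝ) - 1) * ((s : ℝ) - (N - 1)) = 0 := by
    field_simp at hd
    nlinarith [hd]
  refine ⟨?_, ?_⟩
  · have : (N : ℤ) ∣ c - 0 := by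
      simpa using Int.dvd_self_sub_of_emod_eq hc0
    exact Int.modEq_iff_dvd.2 (by simpa using dvd_neg.2 this)
  · rcases mul_eq_zero.1 hdR with h | h
    · have hs1 : s = 1 := by
        have : (s : ℝ) = 1 := by linarith
        exact_mod_cast this
      left
      have : (N : ℤ) ∣ d - 1 := Int.dvd_self_sub_of_emod_eq hs1
      exact Int.modEq_iff_dvd.2 (by simpa using (dvd_neg.2 this))
    · have hs1 : s = (N : ℤ) - 1 := by
        have : (s : ℝ) = (N : ℝ) - 1 := by linarith
        exact_mod_cast this
      right
      have h1 : (N : ℤ) ∣ d - ((N : ℤ) - 1) := Int.dvd_self_sub_of_emod_eq hs1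
      have h2 : (N : ℤ) ∣ d - (-1) := by
        have : d - (-1) = (d - ((N : ℤ) - 1)) + N := by ring
        rw [this]; exact h1.add (dvd_refl _)
      exact Int.modEq_iff_dvd.2 (by rw [show (-1 : ℤ) - d = -(d - (-1)) by ring]; exact dvd_neg.2 h2)
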